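/- (Proposition 2.1, second bijection.) The assignment (Δ̂, Π) ↦ L(Δ̂,Π) := {(v, ξ) ∈ V ⊕ V* : ξ ∈ Δ̂ and η(v) = Π(ξ, η) for all η ∈ Δ̂} is a bijection from the set of pairs (Δ̂, Π), where Δ̂ is a subspace of V* and Π is an alternating bilinear form on Δ̂, onto the set of Lagrangian subspaces of V ⊕ V*. -/

import Mathlib

/-- The canonical split-signature pairing on `V ⊕ V*`. -/
noncomputable def diracPairing {V : Type*} [AddCommGroup V] [Module ℝ V]
    (x y : V × Module.Dual ℝ V) : ℝ :=
  (x.2 y.1 + y.2 x.1) / 2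

/-- `L ⊆ V ⊕ V*` is Lagrangian: `dim L = dim V` and the pairing vanishes on `L`. -/
def IsLagrangian {V : Type*} [AddCommGroup V] [Module ℝ V]
    (L : Submodule ℝ (V × Module.Dual ℝ V)) : Prop :=
  Module.finrank ℝ L = Module.finrank ℝ V ∧
    ∀ x ∈ L, ∀ y ∈ L, diracPairing x y = 0

/-- The underlying set of `L(Δ̂,Π) = {(v,ξ) : ξ ∈ Δ̂, η(v) = Π(ξ,η) for all η ∈ Δ̂}`. -/
def cographSet {V : Type*} [AddCommGroup V] [Module ℝ V]
    (p : (D : Submodule ℝ (Module.Dual ℝ V)) × {P : D →ₗ[ℝ] D →ₗ[ℝ] ℝ // ∀ x, P x x = 0}) :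
    Set (V × Module.Dual ℝ V) :=
  {q | ∃ h : q.2 ∈ p.1, ∀ η : p.1, (η : Module.Dual ℝ V) q.1 = p.2.1 ⟨q.2, h⟩ η}

set_option maxHeartbeats 1000000
set_option synthInstance.maxHeartbeats 400000

section Aux

variable {V : Type*} [AddCommGroup V] [Module ℝ V]

/-- Skew-symmetry from alternation. -/
theorem skew_of_alt {D : Submodule ℝ (Module.Dual ℝ V)} (P : D →ₗ[ℝ] D →ₗ[ℝ] ℝ)
    (hP : ∀ x, P x x = 0) (x y : D) : P x y = - P y x := by
  have h := hP (x + y)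
  simp only [map_add, LinearMap.add_apply, hP] at h
  linarith

/-- In finite dimensions, any functional on a subspace of the dual is evaluation at a vector. -/
theorem exists_dual_rep [FiniteDimensional ℝ V] (D : Submodule ℝ (Module.Dual ℝ V))
    (f : D →ₗ[ℝ] ℝ) : ∃ v : V, ∀ η : D, (η : Module.Dual ℝ V) v = f η := by
  obtain ⟨g, hg⟩ := LinearMap.exists_extend f
  refine ⟨(Module.evalEquiv ℝ V).symm g, fun η => ?_⟩
  rw [Module.apply_evalEquiv_symm_apply, ← hg]
  rfl

/-- The cograph as a submodule. -/
def cograph (p : (D : Submodule ℝ (Module.Dual ℝ V)) ×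
    {P : D →ₗ[ℝ] D →ₗ[ℝ] ℝ // ∀ x, P x x = 0}) : Submodule ℝ (V × Module.Dual ℝ V) where
  carrier := cographSet p
  zero_mem' := by
    refine ⟨p.1.zero_mem, fun η => ?_⟩
    have h0 : (⟨(0 : V × Module.Dual ℝ V).2, p.1.zero_mem⟩ : p.1) = 0 := rfl
    rw [h0, map_zero]
    simp
  add_mem' := by
    rintro a b ⟨ha, hfa⟩ ⟨hb, hfb⟩
    refine ⟨p.1.add_mem ha hb, fun η => ?_⟩
    have : (⟨(a + b).2, p.1.add_mem ha hb⟩ : p.1) = ⟨a.2, ha⟩ + ⟨b.2, hb⟩ := rfl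
    rw [this, map_add, LinearMap.add_apply, ← hfa η, ← hfb η]
    exact map_add (η : Module.Dual ℝ V) a.1 b.1
  smul_mem' := by
    rintro c a ⟨ha, hfa⟩
    refine ⟨p.1.smul_mem c ha, fun η => ?_⟩
    have : (⟨(c • a).2, p.1.smul_mem c ha⟩ : p.1) = c • ⟨a.2, ha⟩ := rfl
    rw [this, map_smul, LinearMap.smul_apply, ← hfa η]
    exact map_smul (η : Module.Dual ℝ V) c a.1

theorem cograph_coe (p : (D : Submodule ℝ (Module.Dual ℝ V)) ×
    {P : D →ₗ[ℝ] D →ₗ[ℝ] ℝ // ∀ x, P x x = 0}) :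
    (cograph p : Set (V × Module.Dual ℝ V)) = cographSet p := rfl

theorem mem_cograph {p : (D : Submodule ℝ (Module.Dual ℝ V)) ×
    {P : D →ₗ[ℝ] D →ₗ[ℝ] ℝ // ∀ x, P x x = 0}} {q : V × Module.Dual ℝ V} :
    q ∈ cograph p ↔ ∃ h : q.2 ∈ p.1, ∀ η : p.1, (η : Module.Dual ℝ V) q.1 = p.2.1 ⟨q.2, h⟩ η :=
  Iff.rfl

theorem cograph_isLagrangian [FiniteDimensional ℝ V]
    (p : (D : Submodule ℝ (Module.Dual ℝ V)) × {P : D →ₗ[ℝ] D →ₗ[ℝ] ℝ // ∀ x, P x x = 0}) :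
    IsLagrangian (cograph p) := by
  constructor
  · -- dimension count
    set D := p.1 with hDdef
    -- a linear section `s : D →ₗ V` with `η (s ξ) = P ξ η`
    haveI : Module.Free ℝ (Module.Dual ℝ D) := Module.Free.of_divisionRing ℝ _
    haveI : Module.Projective ℝ (Module.Dual ℝ D) := Module.Projective.of_free
    have hsurj : Function.Surjective (D.subtype.dualMap) :=
      fun φ =>
        have ⟨f', hf'⟩ := D.subtype.exists_leftInverse_of_injective
          (LinearMap.ker_eq_bot.mpr D.injective_subtype)
        ⟨φ.comp f', LinearMap.ext fun x => congrArg φ (LinearMap.congr_fun hf' x)⟩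
    obtain ⟨E, hE⟩ := (D.subtype.dualMap).exists_rightInverse_of_surjective
      (LinearMap.range_eq_top.2 hsurj)
    set s : D →ₗ[ℝ] V :=
      ((Module.evalEquiv ℝ V).symm.toLinearMap.comp E).comp p.2.1 with hs
    have hs_spec : ∀ ξ η : D, (η : Module.Dual ℝ V) (s ξ) = p.2.1 ξ η := by
      intro ξ η
      have h1 : s ξ = (Module.evalEquiv ℝ V).symm (E (p.2.1 ξ)) := rfl
      rw [h1, Module.apply_evalEquiv_symm_apply]
      have h2 : D.subtype.dualMap (E (p.2.1 ξ)) = p.2.1 ξ := by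
        have := congrFun (congrArg (fun f => f.toFun) hE) (p.2.1 ξ)
        simpa using this
      have h3 := congrFun (congrArg (fun f => f.toFun) h2) η
      simpa [LinearMap.dualMap_apply] using h3
    -- the parametrizing map
    set Φ : (D × D.dualCoannihilator) →ₗ[ℝ] (V × Module.Dual ℝ V) :=
      LinearMap.prod
        ((s.comp (LinearMap.fst ℝ D D.dualCoannihilator)) +
          (D.dualCoannihilator.subtype.comp (LinearMap.snd ℝ D D.dualCoannihilator)))
        (D.subtype.comp (LinearMap.fst ℝ D D.dualCoannihilator)) with hΦ
    have hΦ_apply : ∀ x : D × D.dualCoannihilator,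
        Φ x = (s x.1 + (x.2 : V), (x.1 : Module.Dual ℝ V)) := fun x => rfl
    have hΦinj : Function.Injective Φ := by
      intro a b hab
      rw [hΦ_apply a, hΦ_apply b, Prod.mk.injEq] at hab
      obtain ⟨h1, h2⟩ := hab
      have ha1 : a.1 = b.1 := Subtype.ext h2
      rw [ha1] at h1
      have ha2 : a.2 = b.2 := Subtype.ext (by exact add_left_cancel h1)
      exact Prod.ext ha1 ha2
    have hΦrange : LinearMap.range Φ = cograph p := by
      apply le_antisymm
      · rintro q ⟨x, rfl⟩
        rw [hΦ_apply x]
        refine ⟨x.1.2, fun η => ?_⟩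
        have hcast : (⟨(x.1 : Module.Dual ℝ V), x.1.2⟩ : D) = x.1 := rfl
        rw [hcast, map_add, hs_spec x.1 η]
        have hw : (η : Module.Dual ℝ V) (x.2 : V) = 0 := by
          have := x.2.2
          rw [Submodule.mem_dualCoannihilator] at this
          exact this η η.2
        rw [hw, add_zero]
      · rintro ⟨v, ξ⟩ ⟨h, hf⟩
        have hw : v - s ⟨ξ, h⟩ ∈ D.dualCoannihilator := by
          rw [Submodule.mem_dualCoannihilator]
          intro φ hφ
          rw [map_sub, hs_spec ⟨ξ, h⟩ ⟨φ, hφ⟩]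
          have := hf ⟨φ, hφ⟩
          simp only at this
          rw [← this]
          ring
        refine ⟨(⟨ξ, h⟩, ⟨v - s ⟨ξ, h⟩, hw⟩), ?_⟩
        rw [hΦ_apply]
        simp
    have e := LinearEquiv.ofInjective Φ hΦinj
    haveI : Module.Free ℝ D := Module.Free.of_basis (Module.Basis.ofVectorSpace ℝ D)
    haveI : Module.Free ℝ D.dualCoannihilator := Module.Free.of_basis (Module.Basis.ofVectorSpace ℝ D.dualCoannihilator)
    haveI : Module.Finite ℝ D := FiniteDimensional.finiteDimensional_submodule D
    haveI : Module.Finite ℝ D.dualCoannihilator :=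
      FiniteDimensional.finiteDimensional_submodule D.dualCoannihilator
    have h1 : Module.finrank ℝ (D × D.dualCoannihilator) =
        Module.finrank ℝ D + Module.finrank ℝ D.dualCoannihilator :=
      Module.finrank_prod
    have h2 : Module.finrank ℝ (D × D.dualCoannihilator) =
        Module.finrank ℝ (LinearMap.range Φ) := e.finrank_eq
    have h3 : Module.finrank ℝ (LinearMap.range Φ) = Module.finrank ℝ (cograph p) := by
      rw [hΦrange]
    have h4 := Subspace.finrank_add_finrank_dualCoannihilator_eq D
    omega
  · -- isotropy
    rintro x ⟨hx, hfx⟩ y ⟨hy, hfy⟩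
    have h1 : x.2 y.1 = p.2.1 ⟨y.2, hy⟩ ⟨x.2, hx⟩ := hfy ⟨x.2, hx⟩
    have h2 : y.2 x.1 = p.2.1 ⟨x.2, hx⟩ ⟨y.2, hy⟩ := hfx ⟨y.2, hy⟩
    have h3 := skew_of_alt p.2.1 p.2.2 ⟨x.2, hx⟩ ⟨y.2, hy⟩
    unfold diracPairing
    rw [h1, h2]
    linarith

end Aux

/-- Proposition 2.1, second bijection: `(Δ̂, Π) ↦ L(Δ̂,Π)` is a bijection from pairs
of a subspace `Δ̂ ⊆ V*` with an alternating bilinear form `Π` on `Δ̂`, onto the set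
of Lagrangian subspaces of `V ⊕ V*`. -/
theorem lagrangian_classification_bivectors
    (V : Type*) [AddCommGroup V] [Module ℝ V] [FiniteDimensional ℝ V] :
    (∀ p : (D : Submodule ℝ (Module.Dual ℝ V)) × {P : D →ₗ[ℝ] D →ₗ[ℝ] ℝ // ∀ x, P x x = 0},
      ∃ L : Submodule ℝ (V × Module.Dual ℝ V),
        (L : Set (V × Module.Dual ℝ V)) = cographSet p ∧ IsLagrangian L) ∧
    (∀ L : Submodule ℝ (V × Module.Dual ℝ V), IsLagrangian L →
      ∃! p : (D : Submodule ℝ (Module.Dual ℝ V)) × {P : D →ₗ[ℝ] D →ₗ[ℝ] ℝ // ∀ x, P x x = 0},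
        (L : Set (V × Module.Dual ℝ V)) = cographSet p) := by
  constructor
  · intro p
    exact ⟨cograph p, cograph_coe p, cograph_isLagrangian p⟩
  · intro L hL
    obtain ⟨hdim, hiso⟩ := hL
    -- D is the image of the second projection
    set D : Submodule ℝ (Module.Dual ℝ V) :=
      Submodule.map (LinearMap.snd ℝ V (Module.Dual ℝ V)) L with hD
    -- well-definedness: elements of L with the same second component agree
    -- against all functionals in D
    have hwd : ∀ x ∈ L, ∀ y ∈ L, x.2 = y.2 → ∀ η ∈ D, η x.1 = η y.1 := by
      intro x hx y hy hxy η hη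
      obtain ⟨w, hw, hw2⟩ := hη
      have hsub : x - y ∈ L := L.sub_mem hx hy
      have := hiso _ hsub _ hw
      unfold diracPairing at this
      have h2 : (x - y).2 = 0 := by
        simp [Prod.snd_sub, hxy]
      rw [h2] at this
      simp only [LinearMap.zero_apply] at this
      have h3 : w.2 (x - y).1 = 0 := by linarith
      rw [Prod.fst_sub, map_sub] at h3
      simp only [LinearMap.snd_apply] at hw2
      rw [← hw2]
      linarith
    -- projection onto D and a linear section
    set π : L →ₗ[ℝ] D :=
      LinearMap.codRestrict D ((LinearMap.snd ℝ V (Module.Dual ℝ V)).comp L.subtype)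
        (fun x => ⟨x, x.2, rfl⟩) with hπ
    have hπsurj : Function.Surjective π := by
      rintro ⟨ξ, x, hx, hx2⟩
      exact ⟨⟨x, hx⟩, Subtype.ext hx2⟩
    haveI : Module.Free ℝ D := Module.Free.of_divisionRing ℝ D
    haveI : Module.Projective ℝ D := Module.Projective.of_free
    obtain ⟨σ, hσ⟩ := π.exists_rightInverse_of_surjective (LinearMap.range_eq_top.2 hπsurj)
    have hσ2 : ∀ ξ : D, ((σ ξ : L) : V × Module.Dual ℝ V).2 = (ξ : Module.Dual ℝ V) := by
      intro ξ
      have : π (σ ξ) = ξ := by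
        have := congrFun (congrArg (fun f => f.toFun) hσ) ξ
        simpa using this
      exact congrArg Subtype.val this
    -- the bilinear form
    set PP : D →ₗ[ℝ] D →ₗ[ℝ] ℝ :=
      LinearMap.mk₂ ℝ
        (fun ξ η => (η : Module.Dual ℝ V) (((σ ξ : L) : V × Module.Dual ℝ V).1))
        (fun ξ₁ ξ₂ η => by
          simp only [map_add, Submodule.coe_add, Prod.fst_add])
        (fun c ξ η => by
          simp only [map_smul, Submodule.coe_smul, Prod.smul_fst, smul_eq_mul])
        (fun ξ η₁ η₂ => by simp [Submodule.coe_add, LinearMap.add_apply])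
        (fun c ξ η => by simp [Submodule.coe_smul, LinearMap.smul_apply]) with hPP0
    have hPP_apply : ∀ ξ η : D,
        PP ξ η = (η : Module.Dual ℝ V) (((σ ξ : L) : V × Module.Dual ℝ V).1) :=
      fun ξ η => rfl
    have halt : ∀ ξ : D, PP ξ ξ = 0 := by
      intro ξ
      have hmem := (σ ξ : L).2
      have := hiso _ hmem _ hmem
      unfold diracPairing at this
      rw [hPP_apply, ← hσ2 ξ]
      linarith
    set p₀ : (D : Submodule ℝ (Module.Dual ℝ V)) ×
        {P : D →ₗ[ℝ] D →ₗ[ℝ] ℝ // ∀ x, P x x = 0} := ⟨D, PP, halt⟩ with hp₀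
    -- L is contained in the cograph of p₀
    have hle : L ≤ cograph p₀ := by
      intro x hx
      have hmem : x.2 ∈ D := ⟨x, hx, rfl⟩
      refine ⟨hmem, fun η => ?_⟩
      have hσmem := (σ ⟨x.2, hmem⟩ : L).2
      have heq2 : x.2 = ((σ ⟨x.2, hmem⟩ : L) : V × Module.Dual ℝ V).2 :=
        (hσ2 ⟨x.2, hmem⟩).symm
      exact hwd x hx _ hσmem heq2 η η.2
    have hLeq : L = cograph p₀ := by
      apply Submodule.eq_of_le_of_finrank_eq hle
      rw [hdim, (cograph_isLagrangian p₀).1]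
    refine ⟨p₀, by rw [hLeq]; rfl, ?_⟩
    -- uniqueness
    rintro ⟨D', P', hP'⟩ hset
    have hsetL : ∀ q, q ∈ L ↔ q ∈ cographSet ⟨D', P', hP'⟩ := by
      intro q
      constructor
      · intro h; rw [← hset]; exact h
      · intro h; rw [← SetLike.mem_coe, hset]; exact h
    have hDD : D' = D := by
      ext ξ
      constructor
      · intro hξ
        obtain ⟨v, hv⟩ := exists_dual_rep D' (P' ⟨ξ, hξ⟩)
        have : (v, ξ) ∈ cographSet ⟨D', P', hP'⟩ := ⟨hξ, fun η => hv η⟩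
        have hvL : (v, ξ) ∈ L := (hsetL _).2 this
        exact ⟨(v, ξ), hvL, rfl⟩
      · rintro ⟨x, hx, hx2⟩
        obtain ⟨h, _⟩ := (hsetL x).1 hx
        rw [← hx2]
        exact h
    subst hDD
    -- now show the forms agree
    have hPP : P' = PP := by
      apply LinearMap.ext; intro ξ; apply LinearMap.ext; intro η
      have hσmem := (σ ξ : L).2
      obtain ⟨h, hf⟩ := (hsetL _).1 hσmem
      have hcast : (⟨((σ ξ : L) : V × Module.Dual ℝ V).2, h⟩ : D) = ξ :=
        Subtype.ext (hσ2 ξ)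
      have := hf η
      rw [hcast] at this
      rw [← this]
      rfl
    rw [hp₀]
    exact Sigma.ext rfl (heq_of_eq (Subtype.ext hPP))
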